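/- Let G be a profinite group, p a prime, and γ ∈ G with topological Jordan decomposition γ = δu (δ of finite order m prime to p, u topologically p-unipotent, δu = uδ). Then δ and u are both limits of powers of γ; in particular δ = lim_{n} γ^(p^(n·φ(m))) where φ is Euler's totient, and hence δ, u lie in the closure of the cyclic group generated by γ. -/

import Mathlib

open Filter Topology

/-- Topologically `p`-unipotent: `γ ^ (p ^ n) → 1`. -/
def TopPUnipotent {G : Type*} [Group G] [TopologicalSpace G] (p : ℕ) (γ : G) : Prop :=
  Tendsto (fun n : ℕ => γ ^ (p ^ n)) atTop (𝓝 1)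

/-- If `γ = δ * u` is the topological Jordan decomposition of `γ` in a profinite
group, with `δ` of order `m` prime to `p`, then `δ` and `u` are limits of powers
of `γ`: in particular `δ = lim_n γ^(p^(n·φ(m)))`, and `δ, u` lie in the closure of
the cyclic group generated by `γ`. -/
theorem jordan_components_are_limits_of_powers
    {G : Type*} [Group G] [TopologicalSpace G] [IsTopologicalGroup G]
    [CompactSpace G] [TotallyDisconnectedSpace G] [T2Space G]
    (p : ℕ) (hp : p.Prime) (γ δ u : G) (m : ℕ)
    (hdec : γ = δ * u) (hcomm : δ * u = u * δ)
    (hm : orderOf δ = m) (hmpos : 0 < m) (hord : ¬ p ∣ m)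
    (hu : TopPUnipotent p u) :
    Tendsto (fun n : ℕ => γ ^ (p ^ (n * Nat.totient m))) atTop (𝓝 δ) ∧
      δ ∈ closure ((Subgroup.zpowers γ : Subgroup G) : Set G) ∧
      u ∈ closure ((Subgroup.zpowers γ : Subgroup G) : Set G) := by
  have hC : Commute δ u := hcomm
  have hcop : Nat.Coprime p m := (Nat.Prime.coprime_iff_not_dvd hp).2 hord
  -- δ ^ (p ^ (n * φ m)) = δ
  have hδpow : ∀ n : ℕ, δ ^ (p ^ (n * Nat.totient m)) = δ := by
    intro n
    have hmod : p ^ (n * Nat.totient m) ≡ 1 [MOD m] := by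
      have h1 : p ^ Nat.totient m ≡ 1 [MOD m] := Nat.ModEq.pow_totient hcop
      calc p ^ (n * Nat.totient m) = (p ^ Nat.totient m) ^ n := by rw [pow_mul']
        _ ≡ 1 ^ n [MOD m] := h1.pow n
        _ = 1 := one_pow n
    have h2 : δ ^ (p ^ (n * Nat.totient m)) = δ ^ 1 :=
      pow_eq_pow_iff_modEq.2 (by rw [hm]; exact hmod)
    simpa using h2
  have hkey : ∀ n : ℕ, γ ^ (p ^ (n * Nat.totient m)) = δ * u ^ (p ^ (n * Nat.totient m)) := by
    intro n
    rw [hdec, hC.mul_pow, hδpow]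
  have htot : 0 < Nat.totient m := Nat.totient_pos.2 hmpos
  have hmono : Tendsto (fun n : ℕ => n * Nat.totient m) atTop atTop :=
    tendsto_atTop_atTop.2 fun b => ⟨b, fun n hn =>
      le_trans hn (Nat.le_mul_of_pos_right n htot)⟩
  have hu' : Tendsto (fun n : ℕ => u ^ (p ^ (n * Nat.totient m))) atTop (𝓝 1) :=
    hu.comp hmono
  have hlim : Tendsto (fun n : ℕ => γ ^ (p ^ (n * Nat.totient m))) atTop (𝓝 δ) := by
    have : Tendsto (fun n : ℕ => δ * u ^ (p ^ (n * Nat.totient m))) atTop (𝓝 (δ * 1)) :=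
      (tendsto_const_nhds.mul hu')
    simpa [hkey] using this
  have hsub : closure ((Subgroup.zpowers γ : Subgroup G) : Set G) =
      ((Subgroup.zpowers γ).topologicalClosure : Set G) := rfl
  have hδcl : δ ∈ closure ((Subgroup.zpowers γ : Subgroup G) : Set G) := by
    apply mem_closure_of_tendsto hlim
    filter_upwards with n
    exact Subgroup.pow_mem _ (Subgroup.mem_zpowers γ) _
  refine ⟨hlim, hδcl, ?_⟩
  have hγcl : γ ∈ closure ((Subgroup.zpowers γ : Subgroup G) : Set G) :=
    subset_closure (Subgroup.mem_zpowers γ)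
  have hu_eq : u = δ⁻¹ * γ := by rw [hdec]; group
  rw [hu_eq, hsub] at *
  exact Subgroup.mul_mem _ (Subgroup.inv_mem _ hδcl) hγcl
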